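/- Let A be a finite nonempty set of acts and let a ∈ A satisfy MmL({a},A) ≤ MmL({b},A) for every b ∈ A. Then a ∈ D_M(A). -/
import Mathlib


open Finset

/-- Upper expectation of `f` with respect to the set `P` of probability mass functions:
`Ē(f) = sup_{p ∈ P} ∑ ω, p ω * f ω` (the sup is attained when `P` is nonempty and compact). -/
noncomputable def upperExp {Ω : Type*} [Fintype Ω] (P : Set (Ω → ℝ)) (f : Ω → ℝ) : ℝ :=
  sSup ((fun p => ∑ ω, p ω * f ω) '' P)

/-- `P` is a credal set: a nonempty compact set of probability mass functions on `Ω`. -/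
def IsCredal {Ω : Type*} [Fintype Ω] (P : Set (Ω → ℝ)) : Prop :=
  P.Nonempty ∧ IsCompact P ∧ ∀ p ∈ P, (∀ ω, 0 ≤ p ω) ∧ ∑ ω, p ω = 1

/-- `a ≻ a'`: act `a` dominates act `a'`, i.e. `Ē(a' − a) < 0` (equivalently `E̲(a − a') > 0`). -/
def dominates {Ω : Type*} [Fintype Ω] (P : Set (Ω → ℝ)) (a a' : Ω → ℝ) : Prop :=
  upperExp P (a' - a) < 0

/-- `a` is a maximal act of `A`: `a ∈ A` and no `a' ∈ A` dominates `a`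
(membership in `D_M(A)`). -/
def maximalIn {Ω : Type*} [Fintype Ω] (P : Set (Ω → ℝ)) (A : Finset (Ω → ℝ))
    (a : Ω → ℝ) : Prop :=
  a ∈ A ∧ ∀ a' ∈ A, ¬ dominates P a' a

/-- `mML(S, A) = min_{a ∈ S} max_{a' ∈ A ∖ S} Ē(a' − a)`, valued in `EReal` so that the
maximum over the empty set is `−∞` (hence `mML(A, A) = −∞` when `S` is nonempty). -/
noncomputable def mML {Ω : Type*} [Fintype Ω] [DecidableEq (Ω → ℝ)]
    (P : Set (Ω → ℝ)) (S A : Finset (Ω → ℝ)) : EReal :=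
  S.inf fun a => (A \ S).sup fun a' => ((upperExp P (a' - a) : ℝ) : EReal)

/-- `MmL(S, A) = max_{a' ∈ A ∖ S} min_{a ∈ S} Ē(a' − a)`, valued in `EReal` so that the
maximum over the empty set is `−∞` (hence `MmL(A, A) = −∞`). -/
noncomputable def MmL {Ω : Type*} [Fintype Ω] [DecidableEq (Ω → ℝ)]
    (P : Set (Ω → ℝ)) (S A : Finset (Ω → ℝ)) : EReal :=
  (A \ S).sup fun a' => S.inf fun a => ((upperExp P (a' - a) : ℝ) : EReal)

lemma upperExp_bdd {Ω : Type*} [Fintype Ω] {P : Set (Ω → ℝ)} (hP : IsCredal P) (f : Ω → ℝ) :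
    BddAbove ((fun p => ∑ ω, p ω * f ω) '' P) := by
  have hc : Continuous fun p : Ω → ℝ => ∑ ω, p ω * f ω := by
    apply continuous_finset_sum
    intro ω _
    exact (continuous_apply ω).mul continuous_const
  exact (hP.2.1.image hc).bddAbove

lemma le_upperExp {Ω : Type*} [Fintype Ω] {P : Set (Ω → ℝ)} (hP : IsCredal P)
    (f : Ω → ℝ) {p : Ω → ℝ} (hp : p ∈ P) : ∑ ω, p ω * f ω ≤ upperExp P f :=
  le_csSup (upperExp_bdd hP f) ⟨p, hp, rfl⟩

lemma upperExp_zero {Ω : Type*} [Fintype Ω] {P : Set (Ω → ℝ)} (hP : IsCredal P) :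
    upperExp P 0 = 0 := by
  obtain ⟨p, hp⟩ := hP.1
  have : (fun p : Ω → ℝ => ∑ ω, p ω * (0 : Ω → ℝ) ω) '' P = {0} := by
    apply Set.eq_singleton_iff_nonempty_unique_mem.2
    refine ⟨⟨_, ⟨p, hp, rfl⟩⟩, ?_⟩
    rintro _ ⟨q, hq, rfl⟩
    simp
  rw [upperExp, this, csSup_singleton]

lemma upperExp_subadd {Ω : Type*} [Fintype Ω] {P : Set (Ω → ℝ)} (hP : IsCredal P)
    (f g : Ω → ℝ) : upperExp P (f + g) ≤ upperExp P f + upperExp P g := by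
  apply csSup_le (hP.1.image _)
  rintro _ ⟨p, hp, rfl⟩
  have heq : ∑ ω, p ω * (f + g) ω = (∑ ω, p ω * f ω) + ∑ ω, p ω * g ω := by
    rw [← Finset.sum_add_distrib]
    simp [mul_add]
  show ∑ ω, p ω * (f + g) ω ≤ _
  rw [heq]
  exact add_le_add (le_upperExp hP f hp) (le_upperExp hP g hp)

theorem stmt13 {Ω : Type*} [Fintype Ω] [Nonempty Ω] [DecidableEq (Ω → ℝ)]
    (P : Set (Ω → ℝ)) (hP : IsCredal P)
    (A : Finset (Ω → ℝ)) (hA : A.Nonempty) (a : Ω → ℝ) (ha : a ∈ A)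
    (hopt : ∀ b ∈ A, MmL P {a} A ≤ MmL P {b} A) :
    maximalIn P A a := by
  refine ⟨ha, fun a' ha' hdom => ?_⟩
  rw [dominates] at hdom
  -- hdom : upperExp P (a - a') < 0
  have hsum : upperExp P ((a' - a) + (a - a')) = 0 := by
    have : (a' - a) + (a - a') = 0 := by abel
    rw [this, upperExp_zero hP]
  have hpos : 0 < upperExp P (a' - a) := by
    have h1 := upperExp_subadd hP (a' - a) (a - a')
    rw [hsum] at h1
    linarith [hdom]
  have hne : a ≠ a' := by
    rintro rfl
    simp only [sub_self] at hdom
    rw [upperExp_zero hP] at hdom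
    exact absurd hdom (lt_irrefl 0)
  have hMmL : ∀ b : Ω → ℝ, MmL P {b} A =
      (A \ {b}).sup fun c => ((upperExp P (c - b) : ℝ) : EReal) := by
    intro b
    simp [MmL]
  have hmem : a' ∈ A \ ({a} : Finset (Ω → ℝ)) := by
    simp [ha', Ne.symm hne]
  have hlow : ((upperExp P (a' - a) : ℝ) : EReal) ≤ MmL P {a} A := by
    rw [hMmL]
    exact Finset.le_sup (f := fun c => ((upperExp P (c - a) : ℝ) : EReal)) hmem
  have hMpos : (0 : EReal) < MmL P {a} A :=
    lt_of_lt_of_le (by exact_mod_cast hpos) hlow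
  have hlt : MmL P {a'} A < MmL P {a} A := by
    rw [hMmL a']
    rw [Finset.sup_lt_iff (lt_trans (by simp) hMpos)]
    intro c hc
    by_cases hca : c = a
    · subst hca
      exact lt_of_lt_of_le (by exact_mod_cast hdom) hMpos.le
    · have hc' : c ∈ A \ ({a} : Finset (Ω → ℝ)) := by
        simp [Finset.mem_sdiff.1 hc |>.1, hca]
      have h1 : upperExp P (c - a') ≤ upperExp P (c - a) + upperExp P (a - a') := by
        have : c - a' = (c - a) + (a - a') := by abel
        rw [this]
        exact upperExp_subadd hP _ _
      have h2 : upperExp P (c - a') < upperExp P (c - a) := by linarith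
      calc ((upperExp P (c - a') : ℝ) : EReal) < ((upperExp P (c - a) : ℝ) : EReal) := by
            exact_mod_cast h2
        _ ≤ MmL P {a} A := by rw [hMmL]; exact Finset.le_sup (f := fun c => ((upperExp P (c - a) : ℝ) : EReal)) hc'
  exact absurd (hopt a' ha') (not_le.2 hlt)
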